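/- Let x_{k+1} = c(θ_k)p(x_k) with p(x) = x(1−x) and 3/2 ≤ c(θ_k) ≤ 4. Suppose 0 < x₀ < 1/100 and N ≥ 0 is the smallest integer with x_{N+1} ≥ 1/100. Then there is an absolute constant K > 0 (independent of x₀, θ₀, N) such that (1/K)·(1/x₀) ≤ ∏_{k=0}^{N} c(θ_k)p'(x_k) ≤ K·(1/x₀). -/

import Mathlib

open Finset

/-- Weierstrass product inequality. -/
lemma aux_one_sub_sum_le_prod (f : ℕ → ℝ) :
    ∀ n : ℕ, (∀ i < n, 0 ≤ f i) → (∀ i < n, f i ≤ 1) →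
      1 - ∑ i ∈ Finset.range n, f i ≤ ∏ i ∈ Finset.range n, (1 - f i) := by
  intro n
  induction n with
  | zero => simp
  | succ n ih =>
    intro h0 h1
    have ih' := ih (fun i hi => h0 i (hi.trans (Nat.lt_succ_self n)))
      (fun i hi => h1 i (hi.trans (Nat.lt_succ_self n)))
    have hS : 0 ≤ ∑ i ∈ Finset.range n, f i :=
      Finset.sum_nonneg fun i hi => h0 i ((Finset.mem_range.mp hi).trans (Nat.lt_succ_self n))
    have hP : 0 ≤ ∏ i ∈ Finset.range n, (1 - f i) :=
      Finset.prod_nonneg fun i hi => by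
        have := h1 i ((Finset.mem_range.mp hi).trans (Nat.lt_succ_self n)); linarith
    have hfn0 : 0 ≤ f n := h0 n (Nat.lt_succ_self n)
    have hfn1 : f n ≤ 1 := h1 n (Nat.lt_succ_self n)
    rw [Finset.sum_range_succ, Finset.prod_range_succ]
    nlinarith [mul_nonneg hS hfn0]

/-- Along the escape from the bottom, the product of derivatives
∏_{k=0}^{N} c(θ_k)p'(x_k) is comparable to 1/x₀, with an absolute constant K. -/
theorem product_comparable_to_inverse
    : ∃ K : ℝ, 0 < K ∧
      ∀ (c : ℕ → ℝ) (x : ℕ → ℝ) (N : ℕ),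
        (∀ k, 3 / 2 ≤ c k ∧ c k ≤ 4) →
        (∀ k, x (k + 1) = c k * (x k * (1 - x k))) →
        0 < x 0 → x 0 < 1 / 100 →
        1 / 100 ≤ x (N + 1) →
        (∀ k ≤ N, x k < 1 / 100) →
        (1 / K) * (1 / x 0) ≤ (∏ k ∈ Finset.range (N + 1), c k * (1 - 2 * x k)) ∧
        (∏ k ∈ Finset.range (N + 1), c k * (1 - 2 * x k)) ≤ K * (1 / x 0) := by
  refine ⟨200, by norm_num, ?_⟩
  intro c x N hc hrec hx0 hx0' hN hsmall
  -- positivity along the orbit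
  have hpos : ∀ k, k ≤ N + 1 → 0 < x k := by
    intro k
    induction k with
    | zero => intro _; exact hx0
    | succ k ih =>
      intro hk
      have hk' : k ≤ N := Nat.lt_succ_iff.mp hk
      have h1 : 0 < x k := ih (hk'.trans (Nat.le_succ N))
      have h2 : x k < 1 / 100 := hsmall k hk'
      have hck : (0:ℝ) < c k := lt_of_lt_of_le (by norm_num) (hc k).1
      rw [hrec k]
      exact mul_pos hck (mul_pos h1 (by linarith))
  -- telescoping
  have htel : (∏ k ∈ Finset.range (N + 1), c k * (1 - x k)) = x (N + 1) / x 0 := by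
    have : ∀ n, n ≤ N + 1 → (∏ k ∈ Finset.range n, c k * (1 - x k)) = x n / x 0 := by
      intro n
      induction n with
      | zero => intro _; simp [div_self hx0.ne']
      | succ n ih =>
        intro hn
        rw [Finset.prod_range_succ, ih ((Nat.le_succ n).trans hn), hrec n]
        field_simp
    exact this (N + 1) le_rfl
  -- geometric decay backwards
  have hdecay : ∀ j, j ≤ N → x (N - j) ≤ (200 / 297) ^ j * x N := by
    intro j
    induction j with
    | zero => intro _; simp
    | succ j ih =>
      intro hj
      have hj' : j ≤ N := (Nat.le_succ j).trans hj
      have ihj := ih hj'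
      set m := N - (j + 1) with hm
      have heq : m + 1 = N - j := by omega
      have hmN : m ≤ N := Nat.sub_le _ _
      have hxm0 : 0 < x m := hpos m (hmN.trans (Nat.le_succ N))
      have hxm1 : x m < 1 / 100 := hsmall m hmN
      have hck : (3:ℝ) / 2 ≤ c m := (hc m).1
      have hstep : (297 / 200 : ℝ) * x m ≤ x (N - j) := by
        rw [← heq, hrec m]
        nlinarith [mul_nonneg (sub_nonneg.mpr hck) (mul_nonneg hxm0.le
          (show (0:ℝ) ≤ 1 - x m by linarith)),
          mul_pos hxm0 (show (0:ℝ) < 3/200 - 3/2 * x m by linarith)]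
      have hpow : (0:ℝ) < (200 / 297 : ℝ) ^ j := by positivity
      have hxN : 0 < x N := hpos N (Nat.le_succ N)
      calc x m ≤ (200 / 297) * x (N - j) := by linarith
        _ ≤ (200 / 297) * ((200 / 297) ^ j * x N) := by nlinarith
        _ = (200 / 297) ^ (j + 1) * x N := by ring
  -- sum bound
  have hsum : ∑ k ∈ Finset.range (N + 1), x k ≤ 1 / 4 := by
    have hrefl : ∑ j ∈ Finset.range (N + 1), x (N + 1 - 1 - j)
        = ∑ k ∈ Finset.range (N + 1), x k := Finset.sum_range_reflect x (N + 1)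
    have hxN : x N < 1 / 100 := hsmall N le_rfl
    have h1 : ∑ k ∈ Finset.range (N + 1), x k
        ≤ ∑ j ∈ Finset.range (N + 1), (200 / 297 : ℝ) ^ j * (1 / 100) := by
      rw [← hrefl]
      apply Finset.sum_le_sum
      intro j hj
      have hjN : j ≤ N := Nat.lt_succ_iff.mp (Finset.mem_range.mp hj)
      have : N + 1 - 1 - j = N - j := by omega
      rw [this]
      calc x (N - j) ≤ (200 / 297) ^ j * x N := hdecay j hjN
        _ ≤ (200 / 297 : ℝ) ^ j * (1 / 100) := by
            have : (0:ℝ) < (200 / 297 : ℝ) ^ j := by positivity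
            nlinarith
    have h2 : ∑ j ∈ Finset.range (N + 1), (200 / 297 : ℝ) ^ j ≤ 297 / 97 := by
      have hne : (200 / 297 : ℝ) ≠ 1 := by norm_num
      rw [geom_sum_eq hne]
      have hp0 : (0:ℝ) ≤ (200 / 297 : ℝ) ^ (N + 1) := by positivity
      have hp1 : (200 / 297 : ℝ) ^ (N + 1) ≤ 1 :=
        pow_le_one₀ (by norm_num) (by norm_num)
      rw [div_le_iff_of_neg (by norm_num : (200 / 297 : ℝ) - 1 < 0)]
      nlinarith
    rw [← Finset.sum_mul] at h1
    nlinarith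
  -- bounds on x (N+1)
  have hxN : x N < 1 / 100 := hsmall N le_rfl
  have hxNpos : 0 < x N := hpos N (Nat.le_succ N)
  have hXup : x (N + 1) ≤ 4 / 100 := by
    rw [hrec N]
    nlinarith [mul_nonneg (sub_nonneg.mpr (hc N).2) (mul_nonneg hxNpos.le
      (show (0:ℝ) ≤ 1 - x N by linarith)), mul_pos hxNpos hxNpos]
  -- decompose the product
  have hfac : ∀ k ∈ Finset.range (N + 1),
      c k * (1 - 2 * x k) = (c k * (1 - x k)) * ((1 - 2 * x k) / (1 - x k)) := by
    intro k hk
    have hkN : k ≤ N := Nat.lt_succ_iff.mp (Finset.mem_range.mp hk)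
    have h2 : x k < 1 / 100 := hsmall k hkN
    have hne : (1 - x k) ≠ 0 := by intro h; rw [sub_eq_zero] at h; rw [← h] at h2; norm_num at h2
    field_simp
  have hsplit : (∏ k ∈ Finset.range (N + 1), c k * (1 - 2 * x k))
      = (x (N + 1) / x 0) * ∏ k ∈ Finset.range (N + 1), (1 - 2 * x k) / (1 - x k) := by
    rw [Finset.prod_congr rfl hfac, Finset.prod_mul_distrib, htel]
  -- bounds on the correction product Q
  have hQbounds : ∀ k ∈ Finset.range (N + 1),
      (1 - 2 * x k ≤ (1 - 2 * x k) / (1 - x k)) ∧ ((1 - 2 * x k) / (1 - x k) ≤ 1)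
      ∧ 0 ≤ 1 - 2 * x k := by
    intro k hk
    have hkN : k ≤ N := Nat.lt_succ_iff.mp (Finset.mem_range.mp hk)
    have h1 : 0 < x k := hpos k (hkN.trans (Nat.le_succ N))
    have h2 : x k < 1 / 100 := hsmall k hkN
    have hd : (0:ℝ) < 1 - x k := by linarith
    refine ⟨?_, ?_, by linarith⟩
    · rw [le_div_iff₀ hd]; nlinarith
    · rw [div_le_one hd]; linarith
  have hQ1 : (∏ k ∈ Finset.range (N + 1), (1 - 2 * x k) / (1 - x k)) ≤ 1 :=
    Finset.prod_le_one (fun k hk => le_trans (hQbounds k hk).2.2 (hQbounds k hk).1)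
      (fun k hk => (hQbounds k hk).2.1)
  have hQ2 : (1 / 2 : ℝ) ≤ ∏ k ∈ Finset.range (N + 1), (1 - 2 * x k) / (1 - x k) := by
    have hW := aux_one_sub_sum_le_prod (fun k => 2 * x k) (N + 1)
      (fun i hi => by
        show (0:ℝ) ≤ 2 * x i
        have := hpos i ((Nat.lt_succ_iff.mp hi).trans (Nat.le_succ N)); linarith)
      (fun i hi => by
        show 2 * x i ≤ (1:ℝ)
        have := hsmall i (Nat.lt_succ_iff.mp hi); linarith)
    have hW2 : (1/2 : ℝ) ≤ ∏ k ∈ Finset.range (N + 1), (1 - 2 * x k) := by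
      rw [← Finset.mul_sum] at hW
      calc (1/2 : ℝ) ≤ 1 - 2 * ∑ k ∈ Finset.range (N + 1), x k := by linarith
        _ ≤ _ := hW
    calc (1/2 : ℝ) ≤ ∏ k ∈ Finset.range (N + 1), (1 - 2 * x k) := hW2
      _ ≤ _ := Finset.prod_le_prod (fun k hk => (hQbounds k hk).2.2)
          (fun k hk => (hQbounds k hk).1)
  -- conclude
  have hx0inv : 0 < 1 / x 0 := by positivity
  have hA : (1 / 100 : ℝ) / x 0 ≤ x (N + 1) / x 0 := by gcongr
  constructor
  · rw [hsplit]
    have hApos : 0 < x (N + 1) / x 0 := by positivity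
    calc (1 / 200 : ℝ) * (1 / x 0) = ((1 / 100) / x 0) * (1 / 2) := by ring
      _ ≤ (x (N + 1) / x 0) * (1 / 2) := by nlinarith
      _ ≤ (x (N + 1) / x 0) * ∏ k ∈ Finset.range (N + 1), (1 - 2 * x k) / (1 - x k) := by
          nlinarith
  · rw [hsplit]
    have hApos : 0 < x (N + 1) / x 0 := by positivity
    have hQ0 : 0 < ∏ k ∈ Finset.range (N + 1), (1 - 2 * x k) / (1 - x k) := by linarith
    calc (x (N + 1) / x 0) * ∏ k ∈ Finset.range (N + 1), (1 - 2 * x k) / (1 - x k)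
        ≤ (x (N + 1) / x 0) * 1 := by nlinarith
      _ = x (N + 1) / x 0 := by ring
      _ ≤ (4 / 100) / x 0 := by gcongr
      _ ≤ 200 * (1 / x 0) := by rw [div_eq_mul_one_div]; nlinarith
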